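/- arXiv:quant-ph/0006076 — 4 statements merged into one kernel-verified Lean document; each statement's English description precedes it below -/
import Mathlib

section
/- Let H be a complex Hilbert space and let N ⊆ H be a set of vectors such that ⟨φ, φ'⟩ is real for all φ, φ' ∈ N. Then there exists an antiunitary operator A on the closed linear span of N such that A φ = φ for every φ ∈ N. -/
open scoped InnerProductSpace ComplexConjugate

set_option maxHeartbeats 1000000 in
theorem stmt_1 {H : Type*} [NormedAddCommGroup H] [InnerProductSpace ℂ H]
    [CompleteSpace H] (N : Set H)
    (hN : ∀ φ ∈ N, ∀ φ' ∈ N, (⟪φ, φ'⟫_ℂ).im = 0) :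
    ∃ A : (Submodule.span ℂ N).topologicalClosure →
          (Submodule.span ℂ N).topologicalClosure,
      Function.Bijective A ∧
      (∀ x y, A (x + y) = A x + A y) ∧
      (∀ (c : ℂ) x, A (c • x) = conj c • A x) ∧
      (∀ x y, ⟪(A x : H), (A y : H)⟫_ℂ = conj ⟪(x : H), (y : H)⟫_ℂ) ∧
      (∀ φ (hφ : φ ∈ N) (h : φ ∈ (Submodule.span ℂ N).topologicalClosure),
        A ⟨φ, h⟩ = ⟨φ, h⟩) := by
  classical
  set K : Submodule ℂ H := (Submodule.span ℂ N).topologicalClosure with hKdef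
  haveI : CompleteSpace K := (Submodule.isClosed_topologicalClosure _).completeSpace_coe
  letI : InnerProductSpace ℝ K := InnerProductSpace.complexToReal
  set N' : Set K := ((↑) : K → H) ⁻¹' N with hN'def
  set M : Submodule ℝ K := (Submodule.span ℝ N').topologicalClosure with hMdef
  haveI : CompleteSpace M := (Submodule.isClosed_topologicalClosure _).completeSpace_coe
  have hre : ∀ x y : K, ⟪x, y⟫_ℝ = (⟪x, y⟫_ℂ).re := fun x y => rfl
  have hco : ∀ x y : K, ⟪(x:H), (y:H)⟫_ℂ = ⟪x, y⟫_ℂ := fun x y => rfl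
  have hN'M : ∀ b : K, b ∈ N' → b ∈ M :=
    fun b hb => Submodule.le_topologicalClosure _ (Submodule.subset_span hb)
  -- Step 1: inner products between elements of M are real
  have key : ∀ c : K, (∀ b ∈ N', (⟪c, b⟫_ℂ).im = 0) → ∀ a ∈ M, (⟪c, a⟫_ℂ).im = 0 := by
    intro c hc a ha
    set g : K →L[ℝ] ℝ := Complex.imCLM.comp ((innerSL ℂ c).restrictScalars ℝ) with hg
    have hker : M ≤ LinearMap.ker (g : K →ₗ[ℝ] ℝ) := by
      apply Submodule.topologicalClosure_minimal
      · rw [Submodule.span_le]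
        intro b hb
        simpa [g, LinearMap.mem_ker] using hc b hb
      · exact ContinuousLinearMap.isClosed_ker g
    simpa [g, LinearMap.mem_ker] using hker ha
  have him0 : ∀ b ∈ N', ∀ a ∈ M, (⟪b, a⟫_ℂ).im = 0 := by
    intro b hb
    refine key b ?_
    intro b' hb'
    rw [← hco]
    exact hN _ hb _ hb'
  have him : ∀ a ∈ M, ∀ b ∈ M, (⟪a, b⟫_ℂ).im = 0 := by
    intro a ha
    refine key a ?_
    intro b hb
    have h1 := him0 b hb a ha
    have h2 : (⟪a, b⟫_ℂ) = conj (⟪b, a⟫_ℂ) := (inner_conj_symm _ _).symm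
    rw [h2, Complex.conj_im, h1, neg_zero]
  -- the "multiplication by I" map and the submodule I•M
  set J : K →ₗ[ℝ] K :=
    { toFun := fun z => Complex.I • z
      map_add' := fun x y => smul_add _ _ _
      map_smul' := fun r z => by simpa using (smul_comm (r : ℝ) Complex.I z).symm } with hJ
  set V : Submodule ℝ K := M.map J with hV
  have hVmem : ∀ y : K, y ∈ M → Complex.I • y ∈ V := fun y hy => ⟨y, hy, rfl⟩
  have hVM : V ≤ Mᗮ := by
    rintro _ ⟨y, hy, rfl⟩
    rw [Submodule.mem_orthogonal]
    intro x hx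
    have : (J y : K) = Complex.I • y := rfl
    rw [this, hre, inner_smul_right]
    have h0 := him x hx y hy
    rw [← hco] at h0
    simp [Complex.mul_re, h0]
  -- density of span ℂ N' in K
  have hNsub : N ⊆ (K : Set H) := fun φ hφ =>
    Submodule.le_topologicalClosure _ (Submodule.subset_span hφ)
  have hmap : (Submodule.span ℂ N').map K.subtype = Submodule.span ℂ N := by
    rw [Submodule.map_span]
    congr 1
    rw [hN'def]
    exact (Subtype.image_preimage_coe _ _).trans (Set.inter_eq_self_of_subset_right hNsub)
  have htop : (Submodule.span ℂ N').topologicalClosure = ⊤ := by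
    rw [Submodule.eq_top_iff']
    intro x
    have hce : Topology.IsClosedEmbedding ((↑) : K → H) :=
      (Submodule.isClosed_topologicalClosure _).isClosedEmbedding_subtypeVal
    have hx : (x : H) ∈ closure ((Submodule.span ℂ N : Submodule ℂ H) : Set H) := by
      have hx2 : (x : H) ∈ (Submodule.span ℂ N).topologicalClosure := x.2
      rw [← SetLike.mem_coe, Submodule.topologicalClosure_coe] at hx2
      exact hx2
    rw [← hmap, Submodule.map_coe, Submodule.coe_subtype, hce.closure_image_eq] at hx
    obtain ⟨y, hy, hyx⟩ := hx
    have : y = x := Subtype.coe_injective hyx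
    rw [this] at hy
    rw [← SetLike.mem_coe, Submodule.topologicalClosure_coe]
    exact hy
  -- elements orthogonal to both M and I•M are zero
  have hbot : ∀ z : K, z ∈ Mᗮ → z ∈ Vᗮ → z = 0 := by
    intro z hzM hzV
    rw [Submodule.mem_orthogonal] at hzM hzV
    have hall : ∀ m : K, m ∈ M → ⟪m, z⟫_ℂ = 0 := by
      intro m hm
      have h1 : (⟪m, z⟫_ℂ).re = 0 := by rw [← hre]; exact hzM m hm
      have h2 : (⟪m, z⟫_ℂ).im = 0 := by
        have h3 := hzV _ (hVmem m hm)
        rw [hre, inner_smul_left] at h3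
        simpa [Complex.mul_re] using h3
      exact Complex.ext h1 h2
    have hS : z ∈ (Submodule.span ℂ N')ᗮ := by
      rw [Submodule.mem_orthogonal]
      intro u hu
      induction hu using Submodule.span_induction with
      | mem b hb => exact hall b (hN'M b hb)
      | zero => simp
      | add u v _ _ hu hv => rw [inner_add_left, hu, hv, add_zero]
      | smul c u _ hu => rw [inner_smul_left, hu, mul_zero]
    rw [Submodule.topologicalClosure_eq_top_iff.mp htop] at hS
    simpa using hS
  -- V is closed
  have hVclosed : IsClosed (V : Set K) := by
    have heq : (V : Set K) = (fun z : K => (-Complex.I) • z) ⁻¹' (M : Set K) := by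
      ext z
      constructor
      · rintro ⟨y, hy, rfl⟩
        show (-Complex.I) • (J y : K) ∈ M
        have h5 : (-Complex.I) • (J y : K) = y := by
          show (-Complex.I) • (Complex.I • y) = y
          rw [smul_smul]
          simp
        rw [h5]
        exact hy
      · intro hz
        refine ⟨(-Complex.I) • z, hz, ?_⟩
        show Complex.I • ((-Complex.I) • z) = z
        rw [smul_smul]
        simp
    rw [heq]
    exact (Submodule.isClosed_topologicalClosure _).preimage (continuous_const_smul _)
  haveI : CompleteSpace V := hVclosed.completeSpace_coe
  -- the orthogonal complement of M is exactly I•M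
  have horth : Mᗮ = V := by
    refine le_antisymm ?_ hVM
    intro w hw
    obtain ⟨v, hv, z, hz, rfl⟩ := Submodule.exists_add_mem_mem_orthogonal (K := V) w
    have hzM : z ∈ Mᗮ := by
      have h1 : v ∈ Mᗮ := hVM hv
      have h2 := Submodule.sub_mem _ hw h1
      simpa using h2
    rw [hbot z hzM hz, add_zero]
    exact hv
  -- the projection and the antiunitary map
  set p : K → K := fun z => (M.orthogonalProjectionOnto z : K) with hp
  have hpmem : ∀ z, p z ∈ M := fun z => (M.orthogonalProjectionOnto z).2
  have hpsub : ∀ z, z - p z ∈ Mᗮ := fun z => Submodule.sub_starProjection_mem_orthogonal (K := M) z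
  have hpadd : ∀ x y, p (x + y) = p x + p y := by
    intro x y
    simp only [hp, map_add, Submodule.coe_add]
  have hpsub2 : ∀ x y, p (x - y) = p x - p y := by
    intro x y
    simp only [hp, map_sub, Submodule.coe_sub]
  have hpreal : ∀ (r : ℝ) z, p (r • z) = r • p z := by
    intro r z
    simp only [hp, map_smul, Submodule.coe_smul]
  have hpfix : ∀ z ∈ M, p z = z := fun z hz => Submodule.starProjection_eq_self_iff.mpr hz
  have hpI : ∀ z, p (Complex.I • z) = Complex.I • z - Complex.I • p z := by
    intro z
    have hmem : Complex.I • z - Complex.I • p z ∈ M := by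
      have h1 : z - p z ∈ Mᗮ := hpsub z
      rw [horth] at h1
      obtain ⟨y, hy, hyz⟩ := h1
      have h2 : Complex.I • z - Complex.I • p z = Complex.I • (z - p z) := (smul_sub _ _ _).symm
      have h3 : (J y : K) = Complex.I • y := rfl
      rw [h2, ← hyz, h3, smul_smul]
      simpa using M.neg_mem hy
    have horthcond : Complex.I • z - (Complex.I • z - Complex.I • p z) ∈ Mᗮ := by
      rw [sub_sub_cancel, horth]
      exact hVmem _ (hpmem z)
    exact Submodule.eq_starProjection_of_mem_orthogonal hmem horthcond
  set A : K → K := fun z => p z - (z - p z) with hA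
  -- basic properties of A
  have hAadd : ∀ x y, A (x + y) = A x + A y := by
    intro x y
    simp only [hA, hpadd]
    abel
  have hAreal : ∀ (r : ℝ) z, A (r • z) = r • A z := by
    intro r z
    simp only [hA, hpreal, smul_sub]
  have hAI : ∀ z, A (Complex.I • z) = -(Complex.I • A z) := by
    intro z
    simp only [hA, hpI z, smul_sub]
    abel
  have hAsmul : ∀ (c : ℂ) z, A (c • z) = conj c • A z := by
    intro c z
    have hdecomp : c • z = (c.re : ℝ) • z + (c.im : ℝ) • (Complex.I • z) := by
      rw [← Complex.coe_smul, ← Complex.coe_smul, smul_smul, ← add_smul, Complex.re_add_im]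
    have hconj : conj c • A z = (c.re : ℝ) • A z + (c.im : ℝ) • (-(Complex.I • A z)) := by
      rw [← Complex.coe_smul, ← Complex.coe_smul, smul_neg, smul_smul, ← sub_eq_add_neg,
        ← sub_smul]
      congr 1
      simp [Complex.ext_iff]
    rw [hdecomp, hAadd, hAreal, hAreal, hAI, hconj]
  have hAfixM : ∀ z ∈ M, A z = z := by
    intro z hz
    simp [hA, hpfix z hz]
  have hAinvol : ∀ z, A (A z) = z := by
    intro z
    have h1 : p (z - p z) = 0 := by
      have := Submodule.orthogonalProjectionOnto_apply_of_mem_orthogonal (hpsub z)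
      rw [show p (z - p z) = ((M.orthogonalProjectionOnto (z - p z) : M) : K) from rfl, this,
        ZeroMemClass.coe_zero]
    have h2 : p (A z) = p z := by
      have : A z = p z - (z - p z) := rfl
      rw [this]
      rw [hpsub2, hpfix _ (hpmem z), h1, sub_zero]
    rw [show A (A z) = p (A z) - (A z - p (A z)) from rfl, h2]
    simp only [hA, h2]
    abel
  -- decomposition z = p z + I • a with a ∈ M
  have hdec : ∀ z : K, ∃ a ∈ M, z = p z + Complex.I • a ∧ A z = p z - Complex.I • a := by
    intro z
    have h1 : z - p z ∈ Mᗮ := hpsub z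
    rw [horth] at h1
    obtain ⟨a, ha, haz⟩ := h1
    have h2 : (J a : K) = Complex.I • a := rfl
    rw [h2] at haz
    exact ⟨a, ha, by rw [haz]; abel, by simp only [hA, haz]⟩
  -- inner product computation
  have hcalc : ∀ m a m' a' : K, m ∈ M → a ∈ M → m' ∈ M → a' ∈ M →
      ⟪m - Complex.I • a, m' - Complex.I • a'⟫_ℂ =
        conj ⟪m + Complex.I • a, m' + Complex.I • a'⟫_ℂ := by
    intro m a m' a' hm ha hm' ha'
    have hreal : ∀ x y : ↥K, x ∈ M → y ∈ M → ∃ r : ℝ, ⟪x, y⟫_ℂ = (r : ℂ) := by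
      intro x y hx hy
      refine ⟨(⟪x, y⟫_ℂ).re, ?_⟩
      rw [← Complex.re_add_im (⟪x, y⟫_ℂ), him x hx y hy]
      simp
    obtain ⟨r1, e1⟩ := hreal m m' hm hm'
    obtain ⟨r2, e2⟩ := hreal a a' ha ha'
    obtain ⟨r3, e3⟩ := hreal m a' hm ha'
    obtain ⟨r4, e4⟩ := hreal a m' ha hm'
    simp only [inner_sub_left, inner_sub_right, inner_add_left, inner_add_right,
      inner_smul_left, inner_smul_right, e1, e2, e3, e4, Complex.conj_I, map_add,
      map_sub, map_mul, map_neg, Complex.conj_ofReal]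
    ring
  refine ⟨A, ?_, hAadd, hAsmul, ?_, ?_⟩
  · exact Function.Involutive.bijective hAinvol
  · intro x y
    obtain ⟨a, ha, hx1, hx2⟩ := hdec x
    obtain ⟨a', ha', hy1, hy2⟩ := hdec y
    rw [hco, hco, hx2, hy2]
    rw [hcalc (p x) a (p y) a' (hpmem x) ha (hpmem y) ha', ← hx1, ← hy1]
  · intro φ hφ h
    have hmem : (⟨φ, h⟩ : K) ∈ M := hN'M _ (by simpa [hN'def] using hφ)
    exact hAfixM _ hmem
end

section
/- For ψ ∈ ℂ^{2S+1} a unit vector indexed by m ∈ {−S,…,S} and φ(θ)_m = e^{−iθm} ψ_m, the inner product ⟨φ(θ), φ(θ')⟩ is real for all θ, θ' ∈ ℝ if and only if |ψ_m| = |ψ_{−m}| for all m. -/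
open scoped ComplexConjugate

theorem stmt_11 (S : ℕ) (ψ : ℤ → ℂ)
    (hunit : ∑ m ∈ Finset.Icc (-(S : ℤ)) S, ‖ψ m‖ ^ 2 = 1) :
    (∀ θ θ' : ℝ,
      (∑ m ∈ Finset.Icc (-(S : ℤ)) S,
        conj (Complex.exp (-Complex.I * θ * m) * ψ m) *
          (Complex.exp (-Complex.I * θ' * m) * ψ m)).im = 0)
    ↔ ∀ m ∈ Finset.Icc (-(S : ℤ)) S,
        ‖ψ m‖ = ‖ψ (-m)‖ := by
  set F : Finset ℤ := Finset.Icc (-(S : ℤ)) S with hF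
  set c : ℤ → ℂ := fun m => (Complex.normSq (ψ m) : ℂ) with hc
  have hmemF : ∀ m : ℤ, m ∈ F ↔ -m ∈ F := by
    intro m; simp only [hF, Finset.mem_Icc]; omega
  have hreindex : ∀ g : ℤ → ℂ, ∑ m ∈ F, g m = ∑ m ∈ F, g (-m) := by
    intro g
    exact Finset.sum_equiv (Equiv.neg ℤ) (fun i => hmemF i) (fun i _ => by simp)
  have hterm : ∀ (θ θ' : ℝ) (m : ℤ),
      conj (Complex.exp (-Complex.I * θ * m) * ψ m) *
        (Complex.exp (-Complex.I * θ' * m) * ψ m)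
        = c m * Complex.exp (-Complex.I * (θ' - θ) * m) := by
    intro θ θ' m
    have h1 : conj (Complex.exp (-Complex.I * θ * m)) = Complex.exp (Complex.I * θ * m) := by
      rw [← Complex.exp_conj]; congr 1; simp
    simp only [hc]
    rw [map_mul, h1, Complex.normSq_eq_conj_mul_self, mul_mul_mul_comm, ← Complex.exp_add]
    have h3 : Complex.I * θ * m + -Complex.I * θ' * m = -Complex.I * (θ' - θ) * m := by ring
    rw [h3, mul_comm]
  have hsum : ∀ θ θ' : ℝ,
      (∑ m ∈ F, conj (Complex.exp (-Complex.I * θ * m) * ψ m) *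
          (Complex.exp (-Complex.I * θ' * m) * ψ m))
        = ∑ m ∈ F, c m * Complex.exp (-Complex.I * (θ' - θ) * m) :=
    fun θ θ' => Finset.sum_congr rfl fun m _ => hterm θ θ' m
  have hconj : ∀ (t : ℝ),
      conj (∑ m ∈ F, c m * Complex.exp (-Complex.I * t * m))
        = ∑ m ∈ F, c (-m) * Complex.exp (-Complex.I * t * m) := by
    intro t
    rw [map_sum]
    rw [hreindex (fun m => c (-m) * Complex.exp (-Complex.I * t * m))]
    refine Finset.sum_congr rfl fun m _ => ?_
    rw [map_mul, ← Complex.exp_conj]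
    congr 1
    · simp [hc]
    · congr 1
      push_cast
      simp only [map_mul, map_neg, Complex.conj_I, Complex.conj_ofReal, map_intCast]
      ring
  constructor
  · intro h
    set P : Polynomial ℂ := ∑ m ∈ F, Polynomial.C (c m - c (-m)) * Polynomial.X ^ (m + S).toNat
      with hP
    have hroot : ∀ t ∈ Set.Ioo (0:ℝ) 1, P.IsRoot (Complex.exp (-Complex.I * t)) := by
      intro t _
      have hs : (∑ m ∈ F, c m * Complex.exp (-Complex.I * t * m)).im = 0 := by
        have h0 := h 0 t
        rw [hsum 0 t] at h0
        simpa using h0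
      have hself : conj (∑ m ∈ F, c m * Complex.exp (-Complex.I * t * m))
          = ∑ m ∈ F, c m * Complex.exp (-Complex.I * t * m) :=
        Complex.conj_eq_iff_im.mpr hs
      have heq : ∑ m ∈ F, c (-m) * Complex.exp (-Complex.I * t * m)
          = ∑ m ∈ F, c m * Complex.exp (-Complex.I * t * m) := by
        rw [← hconj t, hself]
      have hpow : ∀ m ∈ F, (Complex.exp (-Complex.I * t)) ^ (m + S).toNat
          = Complex.exp (-Complex.I * t * m) * Complex.exp (-Complex.I * t * S) := by
        intro m hm
        have h0 : (0:ℤ) ≤ m + S := by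
          simp only [hF, Finset.mem_Icc] at hm; omega
        have hmS : ((m + (S:ℤ)).toNat : ℂ) = (m : ℂ) + S := by
          have h1 := Int.toNat_of_nonneg h0
          have h2 : (((m + (S:ℤ)).toNat : ℤ) : ℂ) = ((m + (S:ℤ) : ℤ) : ℂ) := by
            exact_mod_cast congrArg (fun x : ℤ => (x : ℂ)) h1
          push_cast at h2 ⊢
          exact h2
        rw [← Complex.exp_nat_mul, hmS, ← Complex.exp_add]
        congr 1; ring
      unfold Polynomial.IsRoot
      rw [hP, Polynomial.eval_finset_sum]
      simp only [Polynomial.eval_mul, Polynomial.eval_C, Polynomial.eval_pow,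
        Polynomial.eval_X]
      calc ∑ m ∈ F, (c m - c (-m)) * Complex.exp (-Complex.I * t) ^ (m + S).toNat
          = ∑ m ∈ F, (c m - c (-m)) *
              (Complex.exp (-Complex.I * t * m) * Complex.exp (-Complex.I * t * S)) :=
            Finset.sum_congr rfl fun m hm => by rw [hpow m hm]
        _ = (∑ m ∈ F, c m * Complex.exp (-Complex.I * t * m)
              - ∑ m ∈ F, c (-m) * Complex.exp (-Complex.I * t * m))
              * Complex.exp (-Complex.I * t * S) := by
            rw [← Finset.sum_sub_distrib, Finset.sum_mul]
            exact Finset.sum_congr rfl fun m _ => by ring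
        _ = 0 := by rw [heq, sub_self, zero_mul]
    have hinj : Set.InjOn (fun t : ℝ => Complex.exp (-Complex.I * t)) (Set.Ioo 0 1) := by
      intro a ha b hb hab
      have hre : Real.cos a = Real.cos b := by
        have h1 := congrArg Complex.re hab
        simpa [Complex.exp_re, Real.cos_neg] using h1
      have hπ : (1:ℝ) ≤ Real.pi := by linarith [Real.pi_gt_three]
      exact Real.injOn_cos ⟨ha.1.le, le_trans ha.2.le hπ⟩ ⟨hb.1.le, le_trans hb.2.le hπ⟩ hre
    have hP0 : P = 0 := by
      apply Polynomial.eq_zero_of_infinite_isRoot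
      apply Set.Infinite.mono
        (s := (fun t : ℝ => Complex.exp (-Complex.I * t)) '' Set.Ioo 0 1)
      · rintro z ⟨t, ht, rfl⟩; exact hroot t ht
      · exact Set.Infinite.image hinj (Set.Ioo_infinite (by norm_num))
    intro m hm
    have hcoeff : P.coeff ((m + S).toNat) = c m - c (-m) := by
      rw [hP, Polynomial.finset_sum_coeff]
      rw [Finset.sum_eq_single m]
      · simp [Polynomial.coeff_C_mul, Polynomial.coeff_X_pow, sub_mul]
      · intro b hb hbm
        have hb' : (b + (S:ℤ)).toNat ≠ (m + (S:ℤ)).toNat := by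
          simp only [hF, Finset.mem_Icc] at hb hm; omega
        simp [Polynomial.coeff_C_mul, Polynomial.coeff_X_pow, sub_mul, Ne.symm hb']
      · intro hmm; exact absurd hm hmm
    have hceq : c m = c (-m) := by
      have h0 := hcoeff
      rw [hP0, Polynomial.coeff_zero] at h0
      exact sub_eq_zero.mp h0.symm
    have hnsq : Complex.normSq (ψ m) = Complex.normSq (ψ (-m)) := by
      simp only [hc] at hceq
      exact_mod_cast hceq
    rw [Complex.norm_def, Complex.norm_def, hnsq]
  · intro h θ θ'
    rw [hsum θ θ']
    have hcast : ∀ m ∈ F, c m * Complex.exp (-Complex.I * ((θ':ℂ) - θ) * m)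
        = c m * Complex.exp (-Complex.I * (((θ' - θ : ℝ)):ℂ) * m) := by
      intro m _; norm_cast
    rw [Finset.sum_congr rfl hcast]
    rw [← Complex.conj_eq_iff_im, hconj (θ' - θ)]
    refine Finset.sum_congr rfl fun m hm => ?_
    have hcm : c (-m) = c m := by
      simp only [hc]
      rw [← Complex.sq_norm, ← Complex.sq_norm, h m hm]
    rw [hcm]
end

section
/- Existence formula for the horizontal lift: let t ↦ φ(t) be a differentiable curve of unit vectors in a complex Hilbert space H, with ρ(t) = |φ(t)⟩⟨φ(t)|. Then l(t) = 2φ'(t) − 2⟨φ(t), φ'(t)⟩ φ(t) satisfies ρ'(t) = (1/2)(|l(t)⟩⟨φ(t)| + |φ(t)⟩⟨l(t)|) and ⟨l(t), φ(t)⟩ = 0. -/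
open scoped InnerProductSpace

theorem stmt_13 {H : Type*} [NormedAddCommGroup H] [InnerProductSpace ℂ H]
    [CompleteSpace H] (φ φd : ℝ → H)
    (hderiv : ∀ t, HasDerivAt φ (φd t) t)
    (hunit : ∀ t, ‖φ t‖ = 1) :
    ∀ t : ℝ,
      (∀ v : H,
        HasDerivAt (fun s => ⟪φ s, v⟫_ℂ • φ s)
          ((1 / 2 : ℂ) •
            (⟪φ t, v⟫_ℂ • ((2 : ℂ) • φd t - (2 : ℂ) • (⟪φ t, φd t⟫_ℂ • φ t)) +
             ⟪(2 : ℂ) • φd t - (2 : ℂ) • (⟪φ t, φd t⟫_ℂ • φ t), v⟫_ℂ • φ t)) t) ∧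
      ⟪(2 : ℂ) • φd t - (2 : ℂ) • (⟪φ t, φd t⟫_ℂ • φ t), φ t⟫_ℂ = 0 := by
  intro t
  have hnorm : ∀ s, (⟪φ s, φ s⟫_ℂ : ℂ) = 1 := by
    intro s
    rw [inner_self_eq_norm_sq_to_K, hunit s]
    norm_num
  have hF : HasDerivAt (fun s => (⟪φ s, φ s⟫_ℂ : ℂ))
      (⟪φ t, φd t⟫_ℂ + ⟪φd t, φ t⟫_ℂ) t := (hderiv t).inner ℂ (hderiv t)
  have hF0 : HasDerivAt (fun s => (⟪φ s, φ s⟫_ℂ : ℂ)) 0 t := by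
    have : (fun s => (⟪φ s, φ s⟫_ℂ : ℂ)) = fun _ => (1 : ℂ) := funext hnorm
    rw [this]; exact hasDerivAt_const t 1
  have hsum : ⟪φ t, φd t⟫_ℂ + ⟪φd t, φ t⟫_ℂ = 0 := hF.unique hF0
  have hconj : ⟪φd t, φ t⟫_ℂ = -⟪φ t, φd t⟫_ℂ := by linear_combination hsum
  have hconj2 : (starRingEnd ℂ) ⟪φ t, φd t⟫_ℂ = -⟪φ t, φd t⟫_ℂ := by
    rw [inner_conj_symm]; exact hconj
  constructor
  · intro v
    have hc : HasDerivAt (fun s => (⟪φ s, v⟫_ℂ : ℂ)) (⟪φd t, v⟫_ℂ) t := by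
      have := (hderiv t).inner ℂ (hasDerivAt_const t v)
      simpa using this
    have h := hc.smul (hderiv t)
    convert h using 1
    · rfl
    simp only [inner_sub_left, inner_smul_left, inner_smul_left, smul_sub, smul_smul,
      smul_add, hnorm t]
    simp only [map_mul, hconj2, map_ofNat]
    module
  · rw [inner_sub_left, inner_smul_left, inner_smul_left, inner_smul_left, hnorm t]
    rw [map_ofNat]
    rw [hconj2]; linear_combination 2*hsum
end

section
/- Let ψ : ℝ → ℂ be defined by ψ(x) = c·x² e^{−x² + i g(x)} where g(x) = 0 for x ≥ 0 and g(x) = α for x < 0, with c > 0 a normalizing constant and α ∈ ℝ. Then the inner product ⟨ψ(·−θ), ψ(·−θ')⟩ in L²(ℝ, ℂ) is real for all θ, θ' if and only if α ∈ πℤ. -/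
open scoped ComplexConjugate

open MeasureTheory Real

lemma prod_eq_aux (c α : ℝ) (ψ : ℝ → ℂ)
    (hψ : ∀ x : ℝ, ψ x =
      (c : ℂ) * (x : ℂ) ^ 2 *
        Complex.exp (-(x : ℂ) ^ 2 +
          Complex.I * ((if 0 ≤ x then (0 : ℝ) else α) : ℂ))) (a b : ℝ) :
    conj (ψ a) * ψ b =
      (((c * a ^ 2 * Real.exp (-a ^ 2)) * (c * b ^ 2 * Real.exp (-b ^ 2)) : ℝ) : ℂ) *
        Complex.exp ((((if 0 ≤ b then (0 : ℝ) else α) - (if 0 ≤ a then (0 : ℝ) else α)) : ℝ)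
          * Complex.I) := by
  rw [hψ a, hψ b]
  rw [map_mul, map_mul, ← Complex.exp_conj]
  simp only [map_add, map_neg, map_pow, map_mul, Complex.conj_I, Complex.conj_ofReal,
    apply_ite (starRingEnd ℂ), map_zero]
  push_cast [Complex.ofReal_exp, apply_ite Complex.ofReal]
  have e1 : ∀ u A : ℂ, Complex.exp (u + -Complex.I * A)
      = Complex.exp u * (Complex.exp (A * Complex.I))⁻¹ := by
    intro u A
    rw [← Complex.exp_neg, ← Complex.exp_add]
    congr 1
    ring
  have e2 : ∀ u B : ℂ, Complex.exp (u + Complex.I * B)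
      = Complex.exp u * Complex.exp (B * Complex.I) := by
    intro u B
    rw [← Complex.exp_add]
    congr 1
    ring
  have e3 : ∀ A B : ℂ, Complex.exp ((B - A) * Complex.I)
      = Complex.exp (B * Complex.I) * (Complex.exp (A * Complex.I))⁻¹ := by
    intro A B
    rw [← Complex.exp_neg, ← Complex.exp_add]
    congr 1
    ring
  rw [e1, e2, e3]
  ring

lemma im_aux (r t : ℝ) : (((r : ℝ) : ℂ) * Complex.exp ((t : ℝ) * Complex.I)).im
    = r * Real.sin t := by
  simp [Complex.exp_mul_I, Complex.mul_im, Complex.add_im, Complex.add_re,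
    Complex.cos_ofReal_re, Complex.sin_ofReal_re, Complex.mul_re]

theorem stmt_19 (c : ℝ) (hc : 0 < c) (α : ℝ) (ψ : ℝ → ℂ)
    (hψ : ∀ x : ℝ, ψ x =
      (c : ℂ) * (x : ℂ) ^ 2 *
        Complex.exp (-(x : ℂ) ^ 2 +
          Complex.I * ((if 0 ≤ x then (0 : ℝ) else α) : ℂ))) :
    (∀ θ θ' : ℝ, (∫ x : ℝ, conj (ψ (x - θ)) * ψ (x - θ')).im = 0)
    ↔ ∃ n : ℤ, α = n * Real.pi := by
  have key := prod_eq_aux c α ψ hψ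
  constructor
  · intro h
    have h01 := h 0 1
    set f : ℝ → ℂ := fun x => conj (ψ (x - 0)) * ψ (x - 1) with hf
    -- measurability
    have hfeq : f = fun x : ℝ => (((c * (x - 0) ^ 2 * Real.exp (-(x - 0) ^ 2)) *
        (c * (x - 1) ^ 2 * Real.exp (-(x - 1) ^ 2)) : ℝ) : ℂ) *
        Complex.exp ((((if 0 ≤ (x - 1) then (0 : ℝ) else α)
          - (if 0 ≤ (x - 0) then (0 : ℝ) else α)) : ℝ) * Complex.I) :=
      funext fun x => key _ _
    have hfm : Measurable f := by
      rw [hfeq]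
      apply Measurable.mul
      · exact Complex.measurable_ofReal.comp
          ((by fun_prop : Continuous fun x : ℝ => (c * (x - 0) ^ 2 * Real.exp (-(x - 0) ^ 2)) *
            (c * (x - 1) ^ 2 * Real.exp (-(x - 1) ^ 2))).measurable)
      · apply Complex.measurable_exp.comp
        apply Measurable.mul ?_ measurable_const
        apply Complex.measurable_ofReal.comp
        apply Measurable.sub
        · exact Measurable.ite
            (measurableSet_le measurable_const (measurable_id.sub_const 1))
            measurable_const measurable_const
        · exact Measurable.ite
            (measurableSet_le measurable_const (measurable_id.sub_const 0))
            measurable_const measurable_const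
    -- integrability
    have h4 : Integrable fun x : ℝ => x ^ (4 : ℕ) * Real.exp (-1 * x ^ 2) := by
      have hi := integrable_rpow_mul_exp_neg_mul_sq (b := 1) one_pos (s := (4 : ℝ)) (by norm_num)
      have e : ∀ x : ℝ, x ^ (4 : ℝ) = x ^ (4 : ℕ) := fun x => by
        rw [show (4 : ℝ) = ((4 : ℕ) : ℝ) by norm_num, Real.rpow_natCast]
      simpa only [e] using hi
    have h2 : Integrable fun x : ℝ => x ^ (2 : ℕ) * Real.exp (-1 * x ^ 2) := by
      have hi := integrable_rpow_mul_exp_neg_mul_sq (b := 1) one_pos (s := (2 : ℝ)) (by norm_num)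
      have e : ∀ x : ℝ, x ^ (2 : ℝ) = x ^ (2 : ℕ) := fun x => by
        rw [show (2 : ℝ) = ((2 : ℕ) : ℝ) by norm_num, Real.rpow_natCast]
      simpa only [e] using hi
    have hG : Integrable fun x : ℝ =>
        2 * c ^ 2 * (x ^ (4 : ℕ) * Real.exp (-1 * x ^ 2))
          + 2 * c ^ 2 * (x ^ (2 : ℕ) * Real.exp (-1 * x ^ 2)) :=
      (h4.const_mul _).add (h2.const_mul _)
    simp only [neg_one_mul] at hG
    have hfint : Integrable f := by
      apply hG.mono' hfm.aestronglyMeasurable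
      filter_upwards with x
      have hx : f x = _ := congrFun hfeq x
      rw [hx, norm_mul,
        Complex.norm_exp_ofReal_mul_I, mul_one, Complex.norm_real, Real.norm_eq_abs, sub_zero]
      rw [abs_of_nonneg (by positivity)]
      have hE : Real.exp (-(x - 1) ^ 2) ≤ 1 := Real.exp_le_one_iff.mpr (by nlinarith [sq_nonneg (x - 1)])
      have hA : (x - 1) ^ 2 ≤ 2 * x ^ 2 + 2 := by nlinarith [sq_nonneg (x + 1)]
      calc c * x ^ 2 * Real.exp (-x ^ 2) * (c * (x - 1) ^ 2 * Real.exp (-(x - 1) ^ 2))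
          = (c * x ^ 2 * Real.exp (-x ^ 2) * (c * (x - 1) ^ 2)) * Real.exp (-(x - 1) ^ 2) := by
            ring
        _ ≤ (c * x ^ 2 * Real.exp (-x ^ 2) * (c * (x - 1) ^ 2)) * 1 :=
            mul_le_mul_of_nonneg_left hE (by positivity)
        _ = (c ^ 2 * x ^ 2 * Real.exp (-x ^ 2)) * (x - 1) ^ 2 := by ring
        _ ≤ (c ^ 2 * x ^ 2 * Real.exp (-x ^ 2)) * (2 * x ^ 2 + 2) :=
            mul_le_mul_of_nonneg_left hA (by positivity)
        _ = 2 * c ^ 2 * (x ^ (4 : ℕ) * Real.exp (-x ^ 2))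
              + 2 * c ^ 2 * (x ^ (2 : ℕ) * Real.exp (-x ^ 2)) := by ring
    -- compute the imaginary part of the integral
    have hint0 : ∫ x : ℝ, (f x).im = 0 := by
      have := integral_im (μ := (volume : Measure ℝ)) hfint
      simp only [RCLike.im_to_complex] at this
      rw [this]
      exact h01
    have him_eq : (fun x : ℝ => (f x).im) = fun x : ℝ =>
        Set.indicator (Set.Ico (0 : ℝ) 1)
          (fun x => (c * x ^ 2 * Real.exp (-x ^ 2))
            * (c * (x - 1) ^ 2 * Real.exp (-(x - 1) ^ 2)) * Real.sin α) x := by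
      funext x
      have hx : f x = _ := congrFun hfeq x
      rw [hx, im_aux, sub_zero]
      by_cases hx0 : 0 ≤ x
      · by_cases hx1 : x < 1
        · rw [if_pos hx0, if_neg (by linarith : ¬ 0 ≤ x - 1),
            Set.indicator_of_mem (Set.mem_Ico.mpr ⟨hx0, hx1⟩)]
          rw [sub_zero]
        · rw [if_pos hx0, if_pos (by linarith : 0 ≤ x - 1),
            Set.indicator_of_notMem (fun hm => hx1 (Set.mem_Ico.mp hm).2)]
          simp
      · rw [if_neg hx0, if_neg (by linarith : ¬ 0 ≤ x - 1),
          Set.indicator_of_notMem (fun hm => hx0 (Set.mem_Ico.mp hm).1)]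
        simp
    rw [him_eq, integral_indicator measurableSet_Ico, integral_mul_const] at hint0
    have hpos : 0 < ∫ x in Set.Ico (0 : ℝ) 1,
        (c * x ^ 2 * Real.exp (-x ^ 2)) * (c * (x - 1) ^ 2 * Real.exp (-(x - 1) ^ 2)) := by
      have hcont : Continuous fun x : ℝ =>
          (c * x ^ 2 * Real.exp (-x ^ 2)) * (c * (x - 1) ^ 2 * Real.exp (-(x - 1) ^ 2)) := by
        fun_prop
      have hival := intervalIntegral.intervalIntegral_pos_of_pos_on
        (f := fun x : ℝ => (c * x ^ 2 * Real.exp (-x ^ 2))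
          * (c * (x - 1) ^ 2 * Real.exp (-(x - 1) ^ 2)))
        (hcont.intervalIntegrable 0 1)
        (fun x hx => by
          have h1 : 0 < x ^ 2 := pow_pos hx.1 2
          have h2 : 0 < (x - 1) ^ 2 :=
            (sq_nonneg (x - 1)).lt_of_ne (Ne.symm (pow_ne_zero 2 (sub_ne_zero.mpr hx.2.ne)))
          have := Real.exp_pos (-x ^ 2)
          have := Real.exp_pos (-(x - 1) ^ 2)
          positivity)
        one_pos
      rwa [intervalIntegral.integral_of_le zero_le_one, integral_Ioc_eq_integral_Ioo,
        ← integral_Ico_eq_integral_Ioo] at hival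
    rcases mul_eq_zero.mp hint0 with h' | h'
    · exact absurd h' hpos.ne'
    · obtain ⟨n, hn⟩ := Real.sin_eq_zero_iff.mp h'
      exact ⟨n, hn.symm⟩
  · rintro ⟨n, hn⟩ θ θ'
    have him : ∀ x : ℝ, (conj (ψ (x - θ)) * ψ (x - θ')).im = 0 := by
      intro x
      rw [key, im_aux]
      have hs : Real.sin ((if 0 ≤ x - θ' then (0 : ℝ) else α)
          - (if 0 ≤ x - θ then (0 : ℝ) else α)) = 0 := by
        rcases le_or_gt 0 (x - θ') with h1 | h1 <;> rcases le_or_gt 0 (x - θ) with h2 | h2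
        · rw [if_pos h1, if_pos h2, sub_zero, Real.sin_zero]
        · rw [if_pos h1, if_neg (not_le.mpr h2), hn, zero_sub, Real.sin_neg,
            Real.sin_int_mul_pi, neg_zero]
        · rw [if_neg (not_le.mpr h1), if_pos h2, hn, sub_zero, Real.sin_int_mul_pi]
        · rw [if_neg (not_le.mpr h1), if_neg (not_le.mpr h2), sub_self, Real.sin_zero]
      rw [hs, mul_zero]
    by_cases hint : Integrable fun x : ℝ => conj (ψ (x - θ)) * ψ (x - θ')
    · have h2 := integral_im (μ := (volume : Measure ℝ)) hint
      simp only [RCLike.im_to_complex] at h2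
      rw [← h2]
      simp only [him, integral_zero]
    · rw [integral_undef hint]
      simp
end
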